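/- Let B be a subset of F_q with |B| ≥ 2. Then either |B + B| ≥ (3/2)|B|, or there exists an additive subgroup G of F_q and an element b ∈ B such that B ⊆ b + G, |B| > (2/3)|G|, and B + B = 2b + G. -/

import Mathlib

open Pointwise

private lemma aux_inter_nonempty {F : Type*} (s t u : Set F) (hu : u.Finite) (hs : s ⊆ u)
    (ht : t ⊆ u) (h : u.ncard < s.ncard + t.ncard) : (s ∩ t).Nonempty := by
  by_contra hc
  rw [Set.not_nonempty_iff_eq_empty] at hc
  have h1 := Set.ncard_union_eq (Set.disjoint_iff_inter_eq_empty.mpr hc) (hu.subset hs)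
    (hu.subset ht)
  have h2 := Set.ncard_le_ncard (Set.union_subset hs ht) hu
  omega

private lemma aux_Hcard {F : Type*} [Field F] [Fintype F] (B : Set F) (hB2 : 2 ≤ B.ncard)
    (hkey : ∀ x ∈ B - B, B.ncard < 2 * (B ∩ ({x} + B)).ncard) :
    (B - B).ncard < 2 * B.ncard := by
  classical
  set A : Finset F := (Set.toFinite B).toFinset with hA
  set HF : Finset F := (Set.toFinite (B - B)).toFinset with hHF
  have hAcard : A.card = B.ncard := (Set.ncard_eq_toFinset_card B (Set.toFinite B)).symm
  have hHcard : HF.card = (B - B).ncard :=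
    (Set.ncard_eq_toFinset_card _ (Set.toFinite (B - B))).symm
  have hmap : ∀ p ∈ A ×ˢ A, p.1 - p.2 ∈ HF := by
    rintro ⟨p, q⟩ hp
    rw [Finset.mem_product] at hp
    simp only [hHF, hA, Set.Finite.mem_toFinset] at hp ⊢
    exact ⟨p, hp.1, q, hp.2, rfl⟩
  have sumeq := Finset.card_eq_sum_card_fiberwise hmap
  have fiberbound : ∀ x ∈ HF,
      (B ∩ ({x} + B)).ncard ≤ ((A ×ˢ A).filter (fun p => p.1 - p.2 = x)).card := by
    intro x hx
    rw [Set.ncard_eq_toFinset_card _ (Set.toFinite (B ∩ ({x} + B)))]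
    apply Finset.card_le_card_of_injOn (fun e => (e, e - x))
    · intro e (he : e ∈ (Set.toFinite (B ∩ ({x} + B))).toFinset)
      simp only [Set.Finite.mem_toFinset, Set.mem_inter_iff, Set.singleton_add,
        Set.mem_image] at he
      obtain ⟨heB, p, hpB, hpe⟩ := he
      simp only [Finset.mem_coe, Finset.mem_filter, Finset.mem_product, hA, Set.Finite.mem_toFinset]
      refine ⟨⟨heB, ?_⟩, by ring⟩
      have : e - x = p := by linear_combination -hpe
      rw [this]; exact hpB
    · intro a _ b _ hab
      exact congrArg Prod.fst hab
  have hsum : HF.card * (B.ncard + 1) ≤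
      ∑ x ∈ HF, 2 * ((A ×ˢ A).filter (fun p => p.1 - p.2 = x)).card := by
    have := Finset.card_nsmul_le_sum HF
      (fun x => 2 * ((A ×ˢ A).filter (fun p => p.1 - p.2 = x)).card) (B.ncard + 1)
      (fun x hx => by
        show B.ncard + 1 ≤ 2 * ((A ×ˢ A).filter (fun p => p.1 - p.2 = x)).card
        have h1 := hkey x (by simpa [hHF, Set.Finite.mem_toFinset] using hx)
        have h2 := fiberbound x hx
        omega)
    simpa [smul_eq_mul] using this
  rw [← Finset.mul_sum, ← sumeq, Finset.card_product, hAcard, hHcard] at hsum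
  nlinarith

theorem stmt_10 {F : Type*} [Field F] [Fintype F]
    (B : Set F) (hB : 2 ≤ B.ncard) :
    ((B + B).ncard : ℝ) ≥ 3 / 2 * B.ncard ∨
      ∃ G : AddSubgroup F, ∃ b ∈ B, B ⊆ {b} + (G : Set F) ∧
        (B.ncard : ℝ) > 2 / 3 * ((G : Set F).ncard : ℝ) ∧
        B + B = {2 * b} + (G : Set F) := by
  classical
  rcases le_or_gt (3 / 2 * (B.ncard : ℝ)) ((B + B).ncard : ℝ) with h | h
  · exact Or.inl h
  right
  have hBfin : B.Finite := Set.toFinite B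
  obtain ⟨b0, hb0⟩ : B.Nonempty := Set.nonempty_of_ncard_ne_zero (by omega)
  -- numeric form of the smallness hypothesis
  have hN : 2 * (B + B).ncard < 3 * B.ncard := by
    have : (2 * (B + B).ncard : ℝ) < 3 * B.ncard := by linarith
    exact_mod_cast this
  -- key intersection estimate
  have hkey : ∀ x ∈ B - B, B.ncard < 2 * (B ∩ ({x} + B)).ncard := by
    rintro x ⟨a, ha, b, hb, rfl⟩
    show B.ncard < 2 * (B ∩ ({a - b} + B)).ncard
    have hseq : ({a} + B) ∩ ({b} + B) = {b} + (B ∩ ({a - b} + B)) := by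
      ext w
      simp only [Set.mem_inter_iff, Set.singleton_add, Set.mem_image]
      constructor
      · rintro ⟨⟨y, hy, h1⟩, ⟨z, hz, h2⟩⟩
        exact ⟨z, ⟨hz, y, hy, by linear_combination h1 - h2⟩, h2⟩
      · rintro ⟨z, ⟨hz, y, hy, h1⟩, h2⟩
        exact ⟨⟨y, hy, by linear_combination h1 + h2⟩, ⟨z, hz, h2⟩⟩
    have hu := Set.ncard_union_add_ncard_inter ({a} + B) ({b} + B)
      (hBfin.image _ |>.subset (by rw [Set.singleton_add])) (by
        rw [Set.singleton_add]; exact hBfin.image _)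
    have hsub : ({a} + B) ∪ ({b} + B) ⊆ B + B := by
      apply Set.union_subset <;> exact Set.add_subset_add (Set.singleton_subset_iff.mpr ‹_›)
        Set.Subset.rfl
    have hle : (({a} + B) ∪ ({b} + B)).ncard ≤ (B + B).ncard :=
      Set.ncard_le_ncard hsub (Set.toFinite _)
    have hca : ({a} + B).ncard = B.ncard := by
      rw [Set.singleton_add]; exact Set.ncard_image_of_injective _ (add_right_injective a)
    have hcb : ({b} + B).ncard = B.ncard := by
      rw [Set.singleton_add]; exact Set.ncard_image_of_injective _ (add_right_injective b)
    have hci : (({a} + B) ∩ ({b} + B)).ncard = (B ∩ ({a - b} + B)).ncard := by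
      rw [hseq, Set.singleton_add]
      exact Set.ncard_image_of_injective _ (add_right_injective b)
    omega
  -- the subgroup
  have hzero : (0 : F) ∈ B - B := ⟨b0, hb0, b0, hb0, sub_self b0⟩
  have hneg : ∀ x ∈ B - B, -x ∈ B - B := by
    rintro x ⟨a, ha, b, hb, rfl⟩
    exact ⟨b, hb, a, ha, by ring⟩
  have hadd : ∀ x ∈ B - B, ∀ y ∈ B - B, x + y ∈ B - B := by
    intro x hx y hy
    have h1 := hkey x hx
    have h2 := hkey (-y) (hneg y hy)
    obtain ⟨e, he1, he2⟩ := aux_inter_nonempty (B ∩ ({x} + B)) (B ∩ ({-y} + B)) B hBfin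
      Set.inter_subset_left Set.inter_subset_left (by omega)
    obtain ⟨he1a, he1b⟩ := he1
    obtain ⟨he2a, he2b⟩ := he2
    rw [Set.singleton_add] at he1b he2b
    obtain ⟨p, hp, hpe⟩ := he1b
    obtain ⟨q, hq, hqe⟩ := he2b
    exact ⟨q, hq, p, hp, by linear_combination hqe - hpe⟩
  set G : AddSubgroup F :=
    { carrier := B - B
      zero_mem' := hzero
      neg_mem' := fun hx => hneg _ hx
      add_mem' := fun hx hy => hadd _ hx _ hy } with hG
  have hGset : (G : Set F) = B - B := rfl
  have hHsmall : (B - B).ncard < 2 * B.ncard := aux_Hcard B hB hkey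
  -- B ⊆ b0 + (B - B)
  have hBsub : B ⊆ {b0} + (B - B) := by
    intro b hb
    rw [Set.singleton_add]
    exact ⟨b - b0, ⟨b, hb, b0, hb0, rfl⟩, by ring⟩
  -- B + B = 2b0 + (B - B)
  have hEq : B + B = {2 * b0} + (B - B) := by
    apply Set.Subset.antisymm
    · rintro w ⟨p, hp, q, hq, rfl⟩
      rw [Set.singleton_add]
      exact ⟨(p - b0) + (q - b0), hadd _ (show p - b0 ∈ B - B from ⟨p, hp, b0, hb0, rfl⟩)
        _ (show q - b0 ∈ B - B from ⟨q, hq, b0, hb0, rfl⟩), by ring⟩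
    · rintro w hw
      rw [Set.singleton_add] at hw
      obtain ⟨x, hx, rfl⟩ := hw
      have hsubu : {2 * b0 + x} - B ⊆ {b0} + (B - B) := by
        rintro w hw
        rw [Set.singleton_sub] at hw
        obtain ⟨b, hb, rfl⟩ := hw
        rw [Set.singleton_add]
        refine ⟨x - (b - b0), ?_, by ring⟩
        have h1 := hadd _ hx _ (hneg _ (show b - b0 ∈ B - B from ⟨b, hb, b0, hb0, rfl⟩))
        simpa [sub_eq_add_neg] using h1
      have hct : ({2 * b0 + x} - B).ncard = B.ncard := by
        rw [Set.singleton_sub]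
        exact Set.ncard_image_of_injective _ (fun a b hab => by
          simpa [sub_eq_sub_iff_sub_eq_sub] using (sub_right_injective hab))
      have hcu : ({b0} + (B - B)).ncard = (B - B).ncard := by
        rw [Set.singleton_add]
        exact Set.ncard_image_of_injective _ (add_right_injective b0)
      obtain ⟨e, he1, he2⟩ := aux_inter_nonempty B ({2 * b0 + x} - B) ({b0} + (B - B))
        (Set.toFinite _) hBsub hsubu (by omega)
      rw [Set.singleton_sub] at he2
      obtain ⟨q, hq, hqe⟩ := he2
      exact ⟨e, he1, q, hq, by linear_combination -hqe⟩
  refine ⟨G, b0, hb0, ?_, ?_, ?_⟩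
  · rw [hGset]; exact hBsub
  · rw [hGset]
    have hNH : (B + B).ncard = (B - B).ncard := by
      rw [hEq, Set.singleton_add]
      exact Set.ncard_image_of_injective _ (add_right_injective _)
    rw [hNH] at h
    linarith
  · rw [hGset]; exact hEq
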